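/- Let X be a topological space with at least 3 points. Then X is metrizable if and only if for every x ∈ X the subspace X \ {x} is metrizable. -/

import Mathlib

open TopologicalSpace Set Topology

section Aux

variable {X : Type*} [TopologicalSpace X]

lemma card_t1 (hcard : 3 ≤ Cardinal.mk X)
    (h : ∀ x : X, MetrizableSpace ({x}ᶜ : Set X)) : T1Space X := by
  rw [t1Space_iff_exists_open]
  intro x y hxy
  obtain ⟨z, hzx, hzy⟩ := Cardinal.three_le hcard x y
  haveI := h z
  set W : Set X := {z}ᶜ with hW
  have hxW : x ∈ W := by simp [hW, (Ne.symm hzx)]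
  have hyW : y ∈ W := by simp [hW, (Ne.symm hzy)]
  have hne : (⟨x, hxW⟩ : W) ≠ ⟨y, hyW⟩ := by
    simp [Subtype.ext_iff, hxy]
  have hopen : IsOpen ({(⟨y, hyW⟩ : W)}ᶜ : Set W) := isOpen_compl_singleton
  rw [isOpen_induced_iff] at hopen
  obtain ⟨O, hO, hOeq⟩ := hopen
  refine ⟨O, hO, ?_, ?_⟩
  · have : (⟨x, hxW⟩ : W) ∈ ({(⟨y, hyW⟩ : W)}ᶜ : Set W) := by simpa using hne
    rw [← hOeq] at this
    exact this
  · intro hy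
    have : (⟨y, hyW⟩ : W) ∈ Subtype.val ⁻¹' O := hy
    rw [hOeq] at this
    simp at this

lemma card_t2 (hcard : 3 ≤ Cardinal.mk X)
    (h : ∀ x : X, MetrizableSpace ({x}ᶜ : Set X)) : T2Space X := by
  haveI ht1 : T1Space X := card_t1 hcard h
  constructor
  intro x y hxy
  obtain ⟨z, hzx, hzy⟩ := Cardinal.three_le hcard x y
  haveI := h z
  set W : Set X := {z}ᶜ with hW
  have hxW : x ∈ W := by simp [hW, (Ne.symm hzx)]
  have hyW : y ∈ W := by simp [hW, (Ne.symm hzy)]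
  have hWo : IsOpen W := isOpen_compl_singleton
  have hne : (⟨x, hxW⟩ : W) ≠ ⟨y, hyW⟩ := by simp [Subtype.ext_iff, hxy]
  obtain ⟨A, B, hA, hB, hxA, hyB, hAB⟩ := t2_separation hne
  refine ⟨Subtype.val '' A, Subtype.val '' B,
    hWo.isOpenEmbedding_subtypeVal.isOpenMap _ hA,
    hWo.isOpenEmbedding_subtypeVal.isOpenMap _ hB,
    ⟨_, hxA, rfl⟩, ⟨_, hyB, rfl⟩, ?_⟩
  rw [Set.disjoint_left]
  rintro p ⟨a, ha, rfl⟩ ⟨b, hb, hba⟩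
  have : b = a := Subtype.ext hba
  subst this
  exact Set.disjoint_left.1 hAB ha hb

end Aux

section Main

variable {X : Type*} [TopologicalSpace X]

lemma metrizable_of_two_cards [T1Space X] [T2Space X] {x y : X} (hxy : x ≠ y)
    (hU : MetrizableSpace ({x}ᶜ : Set X)) (hV : MetrizableSpace ({y}ᶜ : Set X)) :
    MetrizableSpace X := by
  classical
  set U : Set X := {x}ᶜ with hUdef
  set V : Set X := {y}ᶜ with hVdef
  have hUo : IsOpen U := isOpen_compl_singleton
  have hVo : IsOpen V := isOpen_compl_singleton
  haveI := hU; haveI := hV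
  letI mU : MetricSpace U := metrizableSpaceMetric U
  letI mV : MetricSpace V := metrizableSpaceMetric V
  have hxV : x ∈ V := by simp [hVdef, hxy]
  set x' : V := ⟨x, hxV⟩ with hx'
  -- separation of x and y
  obtain ⟨A, B, hA, hB, hxA, hyB, hAB⟩ := t2_separation hxy
  have hApre : IsOpen (Subtype.val ⁻¹' A : Set V) := hA.preimage continuous_subtype_val
  obtain ⟨δ, hδ, hball⟩ : ∃ δ > 0, Metric.ball x' δ ⊆ Subtype.val ⁻¹' A :=
    Metric.isOpen_iff.1 hApre x' hxA
  have hsep : ∀ p : V, (p : X) ∈ B → δ ≤ dist p x' := by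
    intro p hp
    by_contra hlt
    push_neg at hlt
    exact Set.disjoint_left.1 hAB (hball hlt) hp
  -- the "distance to x" function
  set g : X → ℝ := fun p => if h : p ∈ V then min 1 (dist (⟨p, h⟩ : V) x' / δ) else 1
    with hgdef
  have g_nonneg : ∀ p, 0 ≤ g p := by
    intro p
    simp only [hgdef]
    split
    · exact le_min zero_le_one (div_nonneg dist_nonneg hδ.le)
    · exact zero_le_one
  have g_le_one : ∀ p, g p ≤ 1 := by
    intro p; simp only [hgdef]; split
    · exact min_le_left _ _
    · exact le_rfl
  have gx : g x = 0 := by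
    simp only [hgdef, dif_pos hxV]
    simp [← hx']
  have g_eq_zero : ∀ p, g p = 0 → p = x := by
    intro p hp
    simp only [hgdef] at hp
    split at hp
    · rcases min_eq_iff.1 hp with ⟨h1, _⟩ | ⟨h1, _⟩
      · norm_num at h1
      · have hd : dist (⟨p, ‹p ∈ V›⟩ : V) x' = 0 := by
          rcases div_eq_zero_iff.1 h1 with h | h
          · exact h
          · exact absurd h hδ.ne'
        exact congrArg Subtype.val (eq_of_dist_eq_zero hd)
    · norm_num at hp
  have g_pos : ∀ p, p ≠ x → 0 < g p := by
    intro p hp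
    rcases (g_nonneg p).lt_or_eq with h | h
    · exact h
    · exact absurd (g_eq_zero p h.symm) hp
  -- continuity of g
  have g_cont : Continuous g := by
    rw [continuous_iff_continuousAt]
    intro p
    by_cases hpV : p ∈ V
    · have hres : ContinuousOn g V := by
        rw [continuousOn_iff_continuous_restrict]
        have : V.restrict g = fun q : V => min 1 (dist q x' / δ) := by
          funext q
          simp [hgdef, Set.restrict, q.2]
        rw [show V.domRestrict g = V.restrict g from rfl, this]
        exact continuous_const.min ((continuous_id.dist continuous_const).div_const δ)
      exact hres.continuousAt (hVo.mem_nhds hpV)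
    · have hpy : p = y := by
        by_contra hne
        exact hpV hne
      subst hpy
      have hone : ∀ q ∈ B, g q = 1 := by
        intro q hq
        simp only [hgdef]
        split
        · rename_i hqV
          have := hsep ⟨q, hqV⟩ hq
          exact min_eq_left ((one_le_div hδ).2 this)
        · rfl
      refine ContinuousAt.congr (continuousAt_const (y := (1:ℝ))) ?_
      filter_upwards [hB.mem_nhds hyB] with q hq
      exact (hone q hq).symm
  -- sublevel sets of g form a neighborhood basis at x
  have g_basis : ∀ N ∈ nhds x, ∃ ε > 0, ∀ p, g p < ε → p ∈ N := by
    intro N hN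
    have : Subtype.val ⁻¹' N ∈ nhds x' := continuous_subtype_val.continuousAt.preimage_mem_nhds hN
    obtain ⟨r, hr, hrsub⟩ := Metric.mem_nhds_iff.1 this
    refine ⟨min 1 (r / δ), lt_min one_pos (div_pos hr hδ), ?_⟩
    intro p hp
    have hp1 : g p < 1 := lt_of_lt_of_le hp (min_le_left _ _)
    have hpV : p ∈ V := by
      by_contra hpV
      simp only [hgdef, dif_neg hpV] at hp1
      exact absurd hp1 (lt_irrefl 1)
    simp only [hgdef, dif_pos hpV] at hp hp1
    have hd1 : dist (⟨p, hpV⟩ : V) x' / δ < 1 := by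
      rcases min_cases (1:ℝ) (dist (⟨p, hpV⟩ : V) x' / δ) with ⟨_, hc⟩ | ⟨_, hc⟩
      · exact absurd hp1 (by simp [min_eq_left hc])
      · rcases lt_or_ge (dist (⟨p, hpV⟩ : V) x' / δ) 1 with h | h
        · exact h
        · simp [min_eq_left h] at hp1
    have : dist (⟨p, hpV⟩ : V) x' / δ < r / δ := by
      have := lt_of_lt_of_le hp (min_le_right _ _)
      rwa [min_eq_right hd1.le] at this
    have : dist (⟨p, hpV⟩ : V) x' < r := by
      exact (div_lt_div_iff_of_pos_right hδ).1 this
    exact hrsub this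
  -- the glued distance
  have memU : ∀ {p : X}, p ≠ x → p ∈ U := fun hp => hp
  set D : X → X → ℝ := fun p q =>
    if hp : p = x then g q
    else if hq : q = x then g p
    else min (min 1 (dist (⟨p, memU hp⟩ : U) ⟨q, memU hq⟩) + |g p - g q|) (g p + g q)
    with hDdef
  have Dxq : ∀ q, D x q = g q := fun q => by simp [hDdef]
  have Dpx : ∀ p, p ≠ x → D p x = g p := fun p hp => by simp [hDdef, hp]
  have Dpq : ∀ (p q : X) (hp : p ≠ x) (hq : q ≠ x), D p q =
      min (min 1 (dist (⟨p, memU hp⟩ : U) ⟨q, memU hq⟩) + |g p - g q|) (g p + g q) :=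
    fun p q hp hq => by simp [hDdef, hp, hq]
  have D_self : ∀ p, D p p = 0 := by
    intro p
    by_cases hp : p = x
    · rw [hp, Dxq, gx]
    · rw [Dpq p p hp hp]
      simp [g_nonneg p]
  have D_nonneg : ∀ p q, 0 ≤ D p q := by
    intro p q
    by_cases hp : p = x
    · rw [hp, Dxq]; exact g_nonneg q
    · by_cases hq : q = x
      · rw [hq, Dpx p hp]; exact g_nonneg p
      · rw [Dpq p q hp hq]
        refine le_min (add_nonneg (le_min zero_le_one dist_nonneg) (abs_nonneg _))
          (add_nonneg (g_nonneg p) (g_nonneg q))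
  have D_comm : ∀ p q, D p q = D q p := by
    intro p q
    by_cases hp : p = x
    · rw [hp]
      by_cases hq : q = x
      · rw [hq]
      · rw [Dxq, Dpx q hq]
    · by_cases hq : q = x
      · rw [hq, Dxq, Dpx p hp]
      · rw [Dpq p q hp hq, Dpq q p hq hp, dist_comm, abs_sub_comm, add_comm (g p) (g q)]
  -- Lipschitz property of g w.r.t. D
  have L1 : ∀ p q, g p - g q ≤ D p q := by
    intro p q
    by_cases hp : p = x
    · rw [hp, Dxq, gx]
      linarith [g_nonneg q]
    · by_cases hq : q = x
      · rw [hq, Dpx p hp, gx]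
        linarith
      · rw [Dpq p q hp hq]
        refine le_min ?_ ?_
        · have := le_abs_self (g p - g q)
          have h0 : (0:ℝ) ≤ min 1 (dist (⟨p, memU hp⟩ : U) ⟨q, memU hq⟩) :=
            le_min zero_le_one dist_nonneg
          linarith
        · linarith [g_nonneg q]
  -- triangle for the truncated metric on U
  have trunc : ∀ p q r : U, min 1 (dist p r) ≤ min 1 (dist p q) + min 1 (dist q r) := by
    intro p q r
    rcases le_or_gt 1 (dist p q) with h | h
    · rw [min_eq_left h]
      linarith [min_le_left 1 (dist p r), le_min zero_le_one (dist_nonneg (x := q) (y := r)),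
        min_le_left 1 (dist q r), (le_min zero_le_one dist_nonneg : (0:ℝ) ≤ min 1 (dist q r))]
    · rcases le_or_gt 1 (dist q r) with h' | h'
      · rw [min_eq_left h']
        linarith [min_le_left 1 (dist p r),
          (le_min zero_le_one dist_nonneg : (0:ℝ) ≤ min 1 (dist p q))]
      · rw [min_eq_right h.le, min_eq_right h'.le]
        linarith [min_le_right 1 (dist p r), dist_triangle p q r]
  have D_triangle : ∀ p q r, D p r ≤ D p q + D q r := by
    intro p q r
    by_cases hp : p = x
    · rw [hp, Dxq, Dxq]
      have := L1 r q
      rw [D_comm r q] at this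
      linarith
    · by_cases hq : q = x
      · rw [hq, Dpx p hp, Dxq]
        by_cases hr : r = x
        · rw [hr, Dpx p hp, gx]
          linarith
        · rw [Dpq p r hp hr]
          exact min_le_right _ _
      · by_cases hr : r = x
        · rw [hr, Dpx p hp, Dpx q hq]
          linarith [L1 p q]
        · rw [Dpq p r hp hr, Dpq p q hp hq, Dpq q r hq hr]
          set p' : U := ⟨p, memU hp⟩
          set q' : U := ⟨q, memU hq⟩
          set r' : U := ⟨r, memU hr⟩
          have habs : |g p - g r| ≤ |g p - g q| + |g q - g r| := abs_sub_le _ _ _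
          have htr := trunc p' q' r'
          have h1 : |g p - g q| ≥ g p - g q := le_abs_self _
          have h1' : |g p - g q| ≥ g q - g p := neg_le_abs _ |>.trans_eq' (by ring_nf)
          have h2 : |g q - g r| ≥ g q - g r := le_abs_self _
          have h2' : |g q - g r| ≥ g r - g q := by
            rw [abs_sub_comm]; exact le_abs_self _
          have hm1 : (0:ℝ) ≤ min 1 (dist p' q') := le_min zero_le_one dist_nonneg
          have hm2 : (0:ℝ) ≤ min 1 (dist q' r') := le_min zero_le_one dist_nonneg
          rcases min_cases (min 1 (dist p' q') + |g p - g q|) (g p + g q) with ⟨e1, _⟩ | ⟨e1, _⟩ <;>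
            rcases min_cases (min 1 (dist q' r') + |g q - g r|) (g q + g r) with ⟨e2, _⟩ | ⟨e2, _⟩ <;>
              rw [e1, e2]
          · exact le_trans (min_le_left _ _) (by linarith)
          · exact le_trans (min_le_right _ _) (by linarith)
          · exact le_trans (min_le_right _ _) (by linarith)
          · exact le_trans (min_le_right _ _) (by linarith [g_nonneg q])
  have D_eq : ∀ p q, D p q = 0 → p = q := by
    intro p q hpq
    by_cases hp : p = x
    · rw [hp, Dxq] at hpq
      rw [hp]
      exact (g_eq_zero q hpq).symm
    · by_cases hq : q = x
      · rw [hq, Dpx p hp] at hpq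
        exact absurd (g_eq_zero p hpq) hp
      · rw [Dpq p q hp hq] at hpq
        have hgpq : 0 < g p + g q := by linarith [g_pos p hp, g_nonneg q]
        have hA : min 1 (dist (⟨p, memU hp⟩ : U) ⟨q, memU hq⟩) + |g p - g q| = 0 := by
          rcases min_cases (min 1 (dist (⟨p, memU hp⟩ : U) ⟨q, memU hq⟩) + |g p - g q|)
            (g p + g q) with ⟨e1, _⟩ | ⟨e1, he⟩
          · rw [e1] at hpq; exact hpq
          · rw [e1] at hpq; exact absurd hpq hgpq.ne'
        have hm : (0:ℝ) ≤ min 1 (dist (⟨p, memU hp⟩ : U) ⟨q, memU hq⟩) :=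
          le_min zero_le_one dist_nonneg
        have habs : |g p - g q| = 0 := by
          have := abs_nonneg (g p - g q); linarith
        have hmin0 : min 1 (dist (⟨p, memU hp⟩ : U) ⟨q, memU hq⟩) = 0 := by linarith
        have hd0 : dist (⟨p, memU hp⟩ : U) ⟨q, memU hq⟩ = 0 := by
          rcases min_eq_iff.1 hmin0 with ⟨h1, _⟩ | ⟨h1, _⟩
          · norm_num at h1
          · exact h1
        exact congrArg Subtype.val (eq_of_dist_eq_zero hd0)
  -- the topology agrees with D
  have H : ∀ s : Set X, IsOpen s ↔ ∀ p ∈ s, ∃ ε > 0, ∀ q, D p q < ε → q ∈ s := by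
    intro s
    constructor
    · intro hs p hps
      by_cases hp : p = x
      · obtain ⟨ε, hε, hsub⟩ := g_basis s (hs.mem_nhds (hp ▸ hps))
        refine ⟨ε, hε, fun q hq => ?_⟩
        rw [hp, Dxq] at hq
        exact hsub q hq
      · set p' : U := ⟨p, memU hp⟩
        have hpre : IsOpen (Subtype.val ⁻¹' s : Set U) := hs.preimage continuous_subtype_val
        obtain ⟨r, hr, hrsub⟩ := Metric.isOpen_iff.1 hpre p' hps
        refine ⟨min (min r 1) (g p), lt_min (lt_min hr one_pos) (g_pos p hp), fun q hq => ?_⟩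
        have hqx : q ≠ x := by
          rintro rfl
          rw [Dpx p hp] at hq
          exact absurd hq (not_lt.2 (min_le_right _ _))
        rw [Dpq p q hp hqx] at hq
        set q' : U := ⟨q, memU hqx⟩
        have hB2 : min (min r 1) (g p) ≤ g p + g q := by
          have := g_nonneg q
          have := min_le_right (min r 1) (g p)
          linarith
        have hA2 : min 1 (dist p' q') + |g p - g q| < min (min r 1) (g p) := by
          rcases min_cases (min 1 (dist p' q') + |g p - g q|) (g p + g q) with ⟨e, _⟩ | ⟨e, he⟩
          · rwa [e] at hq
          · rw [e] at hq; linarith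
        have hmlt : min 1 (dist p' q') < min r 1 := by
          have := abs_nonneg (g p - g q)
          have := min_le_left (min r 1) (g p)
          linarith
        have hdlt : dist p' q' < r := by
          rcases le_or_gt 1 (dist p' q') with h | h
          · rw [min_eq_left h] at hmlt
            have := min_le_right r 1
            linarith
          · rw [min_eq_right h.le] at hmlt
            exact lt_of_lt_of_le hmlt (min_le_left r 1)
        have : q' ∈ Metric.ball p' r := by
          rw [Metric.mem_ball, dist_comm]
          exact hdlt
        exact hrsub this
    · intro h
      rw [isOpen_iff_mem_nhds]
      intro p hps
      obtain ⟨ε, hε, hsub⟩ := h p hps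
      by_cases hp : p = x
      · have hopen : IsOpen {q | g q < ε} := isOpen_lt g_cont continuous_const
        have hmem : p ∈ {q | g q < ε} := by
          rw [hp]; simpa [gx] using hε
        refine Filter.mem_of_superset (hopen.mem_nhds hmem) ?_
        intro q hq
        refine hsub q ?_
        rw [hp, Dxq]
        exact hq
      · set p' : U := ⟨p, memU hp⟩
        set T : Set X := {q | |g q - g p| < ε / 2} ∩ (Subtype.val '' Metric.ball p' (ε / 2))
          with hTdef
        have hT1o : IsOpen {q | |g q - g p| < ε / 2} := by
          have : Continuous fun q => |g q - g p| := (g_cont.sub continuous_const).abs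
          exact isOpen_lt this continuous_const
        have hTo : IsOpen T :=
          hT1o.inter (hUo.isOpenEmbedding_subtypeVal.isOpenMap _ Metric.isOpen_ball)
        have hpT : p ∈ T := by
          constructor
          · simp [hε]
          · exact ⟨p', Metric.mem_ball_self (by linarith), rfl⟩
        refine Filter.mem_of_superset (hTo.mem_nhds hpT) ?_
        rintro q ⟨hq1, q', hq', rfl⟩
        refine hsub _ ?_
        have hqx : (q' : X) ≠ x := q'.2
        rw [Dpq _ _ hp hqx]
        calc min (min 1 (dist p' ⟨(q' : X), memU hqx⟩) + |g p - g (q' : X)|) (g p + g (q' : X))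
            ≤ min 1 (dist p' ⟨(q' : X), memU hqx⟩) + |g p - g (q' : X)| := min_le_left _ _
          _ ≤ dist p' ⟨(q' : X), memU hqx⟩ + |g p - g (q' : X)| := by
              have := min_le_right 1 (dist p' ⟨(q' : X), memU hqx⟩)
              linarith
          _ < ε / 2 + ε / 2 := by
              have hd : dist p' (⟨(q' : X), memU hqx⟩ : U) < ε / 2 := by
                have : (⟨(q' : X), memU hqx⟩ : U) = q' := Subtype.ext rfl
                rw [this, dist_comm]
                exact hq'
              have habs : |g p - g (q' : X)| < ε / 2 := by
                rw [abs_sub_comm]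
                exact hq1
              linarith
          _ = ε := by ring
  letI := MetricSpace.ofDistTopology D D_self D_comm D_triangle H D_eq
  infer_instance

end Main

theorem metrizable_reconstructible (X : Type*) [TopologicalSpace X]
    (hcard : 3 ≤ Cardinal.mk X) :
    TopologicalSpace.MetrizableSpace X ↔
      ∀ x : X, TopologicalSpace.MetrizableSpace ({x}ᶜ : Set X) := by
  constructor
  · intro _ x
    infer_instance
  · intro h
    haveI ht1 : T1Space X := card_t1 hcard h
    haveI ht2 : T2Space X := card_t2 hcard h
    haveI : Nontrivial X := by
      rw [← Cardinal.one_lt_iff_nontrivial]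
      exact lt_of_lt_of_le (by norm_num) hcard
    obtain ⟨x, y, hxy⟩ := exists_pair_ne X
    exact metrizable_of_two_cards hxy (h x) (h y)
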